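/- Let d ≥ 1, θ ∈ ℝ, a > 0, let J : ℝ → ℝ be such that y ↦ J(‖x − y‖) is integrable on E for every x ∈ E, let I : ℝ → ℝ, and let f be the Heaviside firing rate at threshold θ. Define U : E → ℝ by U(x) = ∫_{B(0,a)} J(‖x − y‖) dy + I(‖x‖). If U(x) > θ whenever ‖x‖ < a and U(x) < θ whenever ‖x‖ > a, then U solves the stationary neural field equation: U(x) = ∫_E J(‖x − y‖) f(U(y)) dy + I(‖x‖) for all x ∈ E. In other words, any a > 0 for which the explicit profile crosses the threshold exactly at radius a yields a stationary pulse. -/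

import Mathlib

open MeasureTheory

/-- Conversely, if the explicit profile `U(x) = ∫_{B(0,a)} J(‖x − y‖) dy + I(‖x‖)`
crosses the threshold `θ` exactly at radius `a` (above threshold inside the ball of
radius `a`, below outside the closed ball), then it solves the stationary neural field
equation with the Heaviside firing rate `f` at threshold `θ`. -/
theorem explicit_profile_is_stationary_pulse
    (d : ℕ) (hd : 1 ≤ d) (θ a : ℝ) (ha : 0 < a) (J I : ℝ → ℝ) (f : ℝ → ℝ)
    (hf : ∀ u, f u = if θ ≤ u then 1 else 0)
    (hJ : ∀ x : EuclideanSpace ℝ (Fin d), Integrable (fun y => J ‖x - y‖))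
    (U : EuclideanSpace ℝ (Fin d) → ℝ)
    (hUdef : ∀ x : EuclideanSpace ℝ (Fin d),
      U x = (∫ y in Metric.ball (0 : EuclideanSpace ℝ (Fin d)) a, J ‖x - y‖) + I ‖x‖)
    (hgt : ∀ x : EuclideanSpace ℝ (Fin d), ‖x‖ < a → θ < U x)
    (hlt : ∀ x : EuclideanSpace ℝ (Fin d), a < ‖x‖ → U x < θ) :
    ∀ x : EuclideanSpace ℝ (Fin d),
      U x = (∫ y, J ‖x - y‖ * f (U y)) + I ‖x‖ := by
  intro x
  haveI : Inhabited (Fin d) := ⟨⟨0, hd⟩⟩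
  haveI : Nontrivial (EuclideanSpace ℝ (Fin d)) := inferInstance
  have hsph : (volume (Metric.sphere (0 : EuclideanSpace ℝ (Fin d)) a)) = 0 :=
    Measure.addHaar_sphere volume 0 a
  have hae : (fun y => J ‖x - y‖ * f (U y)) =ᵐ[volume]
      (Metric.ball (0 : EuclideanSpace ℝ (Fin d)) a).indicator (fun y => J ‖x - y‖) := by
    have : ∀ᵐ y : EuclideanSpace ℝ (Fin d),
        y ∉ Metric.sphere (0 : EuclideanSpace ℝ (Fin d)) a := by
      rw [ae_iff]
      convert hsph using 2
      ext y
      simp [Metric.mem_sphere, dist_eq_norm]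
    filter_upwards [this] with y hy
    have hy' : ‖y‖ ≠ a := by
      simpa [Metric.mem_sphere, dist_eq_norm] using hy
    rcases lt_or_gt_of_ne hy' with h | h
    · have h1 : f (U y) = 1 := by rw [hf]; simp [le_of_lt (hgt y h)]
      have hmem : y ∈ Metric.ball (0 : EuclideanSpace ℝ (Fin d)) a := by
        simpa [Metric.mem_ball, dist_eq_norm] using h
      simp [h1, Set.indicator_of_mem hmem]
    · have h1 : f (U y) = 0 := by rw [hf]; simp [not_le.mpr (hlt y h)]
      have hmem : y ∉ Metric.ball (0 : EuclideanSpace ℝ (Fin d)) a := by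
        simp [Metric.mem_ball, dist_eq_norm, not_lt.mpr (le_of_lt h)]
      simp [h1, Set.indicator_of_notMem hmem]
  rw [hUdef x, integral_congr_ae hae,
    integral_indicator measurableSet_ball]
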